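/- Assume (V1) and (V2), and let w be the unique positive radial H¹ solution, i.e. w ∈ C([0,∞)) ∩ C²((0,∞)), differentiable at 0, w'' + ((N−1)/r)w' − V(r)w + w·log w² = 0 and w > 0 on (0,∞), w'(0) = 0, and ∫_0^∞ r^{N−1}(w'(r)² + w(r)²) dr < ∞. Suppose ψ ∈ C¹([0,∞)) ∩ C²((0,∞)) satisfies ψ'(0) = 0, ψ'' + ((N−1)/r)ψ' − V(r)ψ + (log w(r)² + 2)ψ = 0 on (0,∞), and ∫_0^∞ r^{N−1}(ψ'(r)² + ψ(r)²) dr < ∞. Then ∫_0^∞ r^{N−1}ψ(r)w(r) dr = 0. -/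

import Mathlib

open Real Filter Set MeasureTheory

noncomputable section

/-- Condition (V1): `V` is `C²` on `(0,∞)`, `r^{N-1}|V(r)|^q` is integrable near `0`
for some `q > N`, and `liminf_{r→∞} V(r)/log r > 1 - N` (possibly `+∞`). -/
def CondV1 (N : ℕ) (V : ℝ → ℝ) : Prop :=
  ContDiffOn ℝ 2 V (Set.Ioi 0) ∧
  (∃ q : ℝ, (N : ℝ) < q ∧
    MeasureTheory.IntegrableOn (fun r : ℝ => r ^ (N - 1) * |V r| ^ q) (Set.Ioc 0 1)) ∧
  (∃ c : ℝ, 1 - (N : ℝ) < c ∧ ∀ᶠ r : ℝ in Filter.atTop, c ≤ V r / Real.log r)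

/-- The function `G(r) = V(r) + (N-1)(N-3)/(4r²) + (N-1) log r`. -/
def Gfun (N : ℕ) (V : ℝ → ℝ) : ℝ → ℝ := fun r =>
  V r + ((N : ℝ) - 1) * ((N : ℝ) - 3) / (4 * r ^ 2) + ((N : ℝ) - 1) * Real.log r

/-- Condition (V2): if `N = 2` or `3`, `G' > 0` on `(0,∞)` and `liminf_{r→0⁺} G'(r) > 0`;
if `N ≥ 4`, `limsup_{r→0⁺} r³G'(r) < 0` and `r³G'(r)` has a unique zero in `(0,∞)`,
which is simple. -/
def CondV2 (N : ℕ) (V : ℝ → ℝ) : Prop :=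
  ((N = 2 ∨ N = 3) →
    (∀ r : ℝ, 0 < r → 0 < deriv (Gfun N V) r) ∧
    ∃ c : ℝ, 0 < c ∧ ∀ᶠ r in nhdsWithin (0 : ℝ) (Set.Ioi 0), c ≤ deriv (Gfun N V) r) ∧
  (4 ≤ N →
    (∃ c : ℝ, c < 0 ∧
      ∀ᶠ r in nhdsWithin (0 : ℝ) (Set.Ioi 0), r ^ 3 * deriv (Gfun N V) r ≤ c) ∧
    (∃! r₀ : ℝ, 0 < r₀ ∧ r₀ ^ 3 * deriv (Gfun N V) r₀ = 0) ∧
    (∀ r₀ : ℝ, 0 < r₀ → r₀ ^ 3 * deriv (Gfun N V) r₀ = 0 →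
      deriv (fun r : ℝ => r ^ 3 * deriv (Gfun N V) r) r₀ ≠ 0))

lemma aux_log_bound {M x : ℝ} (hM : 1 ≤ M) (hx : 0 < x) (hxM : x ≤ M) :
    |x * Real.log (x ^ 2)| ≤ 2 * (M * Real.log M + 1) := by
  have hlogsq : Real.log (x ^ 2) = 2 * Real.log x := by
    rw [Real.log_pow]; push_cast; ring
  rw [hlogsq]
  have hM0 : 0 ≤ M * Real.log M := mul_nonneg (by linarith) (Real.log_nonneg hM)
  rcases le_or_gt x 1 with h1 | h1
  · have hlx : Real.log x ≤ 0 := Real.log_nonpos hx.le h1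
    have h2 : -Real.log x ≤ x⁻¹ - 1 := by
      have := Real.log_le_sub_one_of_pos (inv_pos.2 hx)
      rwa [Real.log_inv] at this
    have hb : x * (-Real.log x) ≤ 1 - x := by
      have h3 : x * (-Real.log x) ≤ x * (x⁻¹ - 1) :=
        mul_le_mul_of_nonneg_left h2 hx.le
      have h4 : x * (x⁻¹ - 1) = 1 - x := by field_simp
      linarith
    rw [abs_of_nonpos (by nlinarith : x * (2 * Real.log x) ≤ 0)]
    nlinarith
  · have hlx : 0 ≤ Real.log x := Real.log_nonneg h1.le
    have hmm : x * Real.log x ≤ M * Real.log M :=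
      mul_le_mul hxM (Real.log_le_log hx hxM) hlx (by linarith)
    rw [abs_of_nonneg (by nlinarith)]
    nlinarith

lemma aux_int_V {n : ℕ} {V : ℝ → ℝ} {q : ℝ} (hq : 1 ≤ q)
    (hVc : ContinuousOn V (Set.Ioi 0))
    (hint : MeasureTheory.IntegrableOn (fun r : ℝ => r ^ n * |V r| ^ q) (Set.Ioc 0 1)) :
    MeasureTheory.IntegrableOn (fun r : ℝ => r ^ n * |V r|) (Set.Ioc 0 1) := by
  have hdom : MeasureTheory.IntegrableOn
      (fun r : ℝ => r ^ n * |V r| ^ q + r ^ n) (Set.Ioc 0 1) :=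
    hint.add ((continuous_pow n).integrableOn_Ioc)
  refine MeasureTheory.Integrable.mono' hdom ?_ ?_
  · exact (((continuous_pow n).continuousOn).mul
      ((hVc.mono (fun x hx => hx.1)).abs)).aestronglyMeasurable measurableSet_Ioc
  · rw [MeasureTheory.ae_restrict_iff' measurableSet_Ioc]
    refine MeasureTheory.ae_of_all _ (fun r hr => ?_)
    have hr0 : 0 < r := hr.1
    have hrn : (0:ℝ) ≤ r ^ n := (pow_pos hr0 n).le
    have habs : ‖r ^ n * |V r|‖ = r ^ n * |V r| := by
      rw [Real.norm_eq_abs, abs_of_nonneg (mul_nonneg hrn (abs_nonneg _))]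
    rw [habs]
    rcases le_or_gt (|V r|) 1 with hV | hV
    · have h1 : r ^ n * |V r| ≤ r ^ n := by nlinarith [abs_nonneg (V r)]
      have h2 : (0:ℝ) ≤ r ^ n * |V r| ^ q :=
        mul_nonneg hrn (Real.rpow_nonneg (abs_nonneg _) q)
      linarith
    · have h1 : |V r| ≤ |V r| ^ q := by
        calc |V r| = |V r| ^ (1:ℝ) := (Real.rpow_one _).symm
          _ ≤ |V r| ^ q := Real.rpow_le_rpow_of_exponent_le hV.le hq
      have h2 : r ^ n * |V r| ≤ r ^ n * |V r| ^ q := mul_le_mul_of_nonneg_left h1 hrn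
      linarith

lemma aux_tendsto_intervalIntegral_left {f : ℝ → ℝ} {b : ℝ} (hb : 0 < b)
    (hf : MeasureTheory.IntegrableOn f (Set.Ioc 0 b)) :
    Filter.Tendsto (fun a => ∫ x in a..b, f x) (nhdsWithin 0 (Set.Ioi 0))
      (nhds (∫ x in Set.Ioc 0 b, f x)) := by
  set g : ℝ → ℝ := (Set.Ioc (0:ℝ) b).indicator f with hgdef
  have hg : MeasureTheory.Integrable g := by
    rwa [MeasureTheory.integrable_indicator_iff measurableSet_Ioc]
  have h0 : Filter.Tendsto (fun a : ℝ => MeasureTheory.volume (Set.Ioc (0:ℝ) a))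
      (nhdsWithin 0 (Set.Ioi 0)) (nhds 0) := by
    have : Filter.Tendsto (fun a : ℝ => ENNReal.ofReal a) (nhdsWithin 0 (Set.Ioi 0))
        (nhds (ENNReal.ofReal 0)) :=
      (ENNReal.continuous_ofReal.tendsto 0).comp (tendsto_id.mono_left nhdsWithin_le_nhds)
    simpa [Real.volume_Ioc] using this
  have hz : Filter.Tendsto (fun a : ℝ => ∫ x in Set.Ioc 0 a, g x)
      (nhdsWithin 0 (Set.Ioi 0)) (nhds 0) :=
    hg.tendsto_setIntegral_nhds_zero (μ := MeasureTheory.volume) h0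
  have heq : ∀ᶠ a : ℝ in nhdsWithin 0 (Set.Ioi 0),
      (∫ x in a..b, f x) = (∫ x in Set.Ioc 0 b, f x) - ∫ x in Set.Ioc 0 a, g x := by
    filter_upwards [Ioc_mem_nhdsGT_of_mem ⟨le_refl (0:ℝ), hb⟩] with a ha
    have hab : a ≤ b := ha.2
    have e1 : (∫ x in a..b, f x) = ∫ x in a..b, g x := by
      apply intervalIntegral.integral_congr
      intro x hx
      rw [Set.uIcc_of_le hab] at hx
      have hxm : x ∈ Set.Ioc (0:ℝ) b := ⟨lt_of_lt_of_le ha.1 hx.1, hx.2⟩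
      simp [hgdef, Set.indicator_of_mem hxm]
    have e2 : (∫ x in (0:ℝ)..a, g x) + (∫ x in a..b, g x) = ∫ x in (0:ℝ)..b, g x :=
      intervalIntegral.integral_add_adjacent_intervals hg.intervalIntegrable hg.intervalIntegrable
    have e3 : (∫ x in (0:ℝ)..a, g x) = ∫ x in Set.Ioc 0 a, g x :=
      intervalIntegral.integral_of_le ha.1.le
    have e4 : (∫ x in (0:ℝ)..b, g x) = ∫ x in Set.Ioc 0 b, f x := by
      rw [intervalIntegral.integral_of_le hb.le]
      exact MeasureTheory.setIntegral_congr_fun measurableSet_Ioc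
        (fun x hx => Set.indicator_of_mem hx f)
    rw [e1, ← e4, ← e2, e3]; ring
  rw [show (∫ x in Set.Ioc 0 b, f x) = (∫ x in Set.Ioc 0 b, f x) - 0 by ring]
  exact Filter.Tendsto.congr' (heq.mono fun a ha => ha.symm) (tendsto_const_nhds.sub hz)

lemma aux_ineq {c rn r d v : ℝ} (hc : 0 ≤ c) (hrn : 0 < rn) (hrnr : rn ≤ r)
    (hsq : c ≤ rn ^ 2 * d ^ 2) : c / r ≤ rn * (d ^ 2 + v ^ 2) := by
  have hr0 : 0 < r := lt_of_lt_of_le hrn hrnr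
  rw [div_le_iff₀ hr0]
  have h1 : rn * (rn * d ^ 2) ≤ r * (rn * d ^ 2) :=
    mul_le_mul_of_nonneg_right hrnr (mul_nonneg hrn.le (sq_nonneg d))
  have h2 : r * (rn * d ^ 2) ≤ r * (rn * (d ^ 2 + v ^ 2)) :=
    mul_le_mul_of_nonneg_left
      (mul_le_mul_of_nonneg_left (le_add_of_nonneg_right (sq_nonneg v)) hrn.le) hr0.le
  have h3 : c ≤ r * (rn * (d ^ 2 + v ^ 2)) := by
    calc c ≤ rn ^ 2 * d ^ 2 := hsq
      _ = rn * (rn * d ^ 2) := by ring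
      _ ≤ r * (rn * d ^ 2) := h1
      _ ≤ r * (rn * (d ^ 2 + v ^ 2)) := h2
  linarith

set_option maxHeartbeats 4000000 in
/-- Assume (V1) and (V2), let `w` be the unique positive radial `H¹` solution
of the logarithmic equation, and let `ψ` be an `H¹` radial solution of the linearized
equation. Then `∫_0^∞ r^{N-1} ψ(r) w(r) dr = 0`, i.e. `ψ ⊥ w` in `L²(r^{N-1}dr)`. -/
theorem orthogonality_psi_w (N : ℕ) (hN : 2 ≤ N) (V : ℝ → ℝ)
    (hV1 : CondV1 N V) (hV2 : CondV2 N V)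
    (w : ℝ → ℝ)
    (hwc : ContinuousOn w (Set.Ici 0))
    (hwC2 : ContDiffOn ℝ 2 w (Set.Ioi 0))
    (hw0 : HasDerivWithinAt w 0 (Set.Ici 0) 0)
    (hwode : ∀ r : ℝ, 0 < r →
      deriv (deriv w) r + ((N : ℝ) - 1) / r * deriv w r - V r * w r
        + w r * Real.log (w r ^ 2) = 0)
    (hwpos : ∀ r : ℝ, 0 < r → 0 < w r)
    (hwH1 : MeasureTheory.IntegrableOn
      (fun r : ℝ => r ^ (N - 1) * (deriv w r ^ 2 + w r ^ 2)) (Set.Ioi 0))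
    (ψ : ℝ → ℝ)
    (hψ1 : ContDiffOn ℝ 1 ψ (Set.Ici 0))
    (hψ2 : ContDiffOn ℝ 2 ψ (Set.Ioi 0))
    (hψ0 : derivWithin ψ (Set.Ici 0) 0 = 0)
    (hψode : ∀ r : ℝ, 0 < r →
      deriv (deriv ψ) r + ((N : ℝ) - 1) / r * deriv ψ r - V r * ψ r
        + (Real.log (w r ^ 2) + 2) * ψ r = 0)
    (hψH1 : MeasureTheory.IntegrableOn
      (fun r : ℝ => r ^ (N - 1) * (deriv ψ r ^ 2 + ψ r ^ 2)) (Set.Ioi 0)) :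
    (∫ r in Set.Ioi (0 : ℝ), r ^ (N - 1) * (ψ r * w r)) = 0 := by
  obtain ⟨hVsm, ⟨q, hqN, hVq⟩, -⟩ := hV1
  clear hV2 hw0
  set n : ℕ := N - 1 with hn
  have hn1 : 1 ≤ n := by omega
  have hnc : (n : ℝ) = (N : ℝ) - 1 := by
    rw [hn, Nat.cast_sub (by omega : 1 ≤ N), Nat.cast_one]
  -- continuity infrastructure
  have hVc : ContinuousOn V (Set.Ioi 0) := hVsm.continuousOn
  have hwcI : ContinuousOn w (Set.Ioi 0) := hwc.mono Set.Ioi_subset_Ici_self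
  have hw'c : ContinuousOn (deriv w) (Set.Ioi 0) :=
    hwC2.continuousOn_deriv_of_isOpen isOpen_Ioi (by norm_num)
  have hψcI : ContinuousOn ψ (Set.Ioi 0) := hψ1.continuousOn.mono Set.Ioi_subset_Ici_self
  have hψ'c : ContinuousOn (deriv ψ) (Set.Ioi 0) :=
    hψ2.continuousOn_deriv_of_isOpen isOpen_Ioi (by norm_num)
  have hdw : ∀ r : ℝ, 0 < r → HasDerivAt w (deriv w r) r := fun r hr =>
    ((hwC2.differentiableOn (by norm_num)).differentiableAt (Ioi_mem_nhds hr)).hasDerivAt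
  have hdw' : ∀ r : ℝ, 0 < r → HasDerivAt (deriv w) (deriv (deriv w) r) r := fun r hr =>
    (((hwC2.deriv_of_isOpen (m := 1) isOpen_Ioi (by norm_num)).differentiableOn
      (by norm_num)).differentiableAt (Ioi_mem_nhds hr)).hasDerivAt
  have hdψ : ∀ r : ℝ, 0 < r → HasDerivAt ψ (deriv ψ r) r := fun r hr =>
    ((hψ2.differentiableOn (by norm_num)).differentiableAt (Ioi_mem_nhds hr)).hasDerivAt
  have hdψ' : ∀ r : ℝ, 0 < r → HasDerivAt (deriv ψ) (deriv (deriv ψ) r) r := fun r hr =>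
    (((hψ2.deriv_of_isOpen (m := 1) isOpen_Ioi (by norm_num)).differentiableOn
      (by norm_num)).differentiableAt (Ioi_mem_nhds hr)).hasDerivAt
  -- limits at 0 of the basic quantities
  have hψ'0 : Filter.Tendsto (deriv ψ) (nhdsWithin 0 (Set.Ioi 0)) (nhds 0) := by
    have h1 : Filter.Tendsto (derivWithin ψ (Set.Ici 0)) (nhdsWithin 0 (Set.Ici 0)) (nhds 0) := by
      have h2 := (hψ1.continuousOn_derivWithin (uniqueDiffOn_Ici 0) le_rfl) 0 Set.self_mem_Ici
      rw [ContinuousWithinAt, hψ0] at h2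
      exact h2
    have h3 : Filter.Tendsto (derivWithin ψ (Set.Ici 0)) (nhdsWithin 0 (Set.Ioi 0)) (nhds 0) :=
      h1.mono_left (nhdsWithin_mono 0 Set.Ioi_subset_Ici_self)
    refine h3.congr' ?_
    filter_upwards [self_mem_nhdsWithin] with r hr
    exact derivWithin_of_mem_nhds (Ici_mem_nhds hr)
  have hψ00 : Filter.Tendsto ψ (nhdsWithin 0 (Set.Ioi 0)) (nhds (ψ 0)) :=
    (hψ1.continuousOn 0 Set.self_mem_Ici).mono_left (nhdsWithin_mono 0 Set.Ioi_subset_Ici_self)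
  have hw00 : Filter.Tendsto w (nhdsWithin 0 (Set.Ioi 0)) (nhds (w 0)) :=
    (hwc 0 Set.self_mem_Ici).mono_left (nhdsWithin_mono 0 Set.Ioi_subset_Ici_self)
  have hpow0 : Filter.Tendsto (fun r : ℝ => r ^ n) (nhdsWithin 0 (Set.Ioi 0)) (nhds 0) := by
    have := ((continuous_pow n).tendsto 0).mono_left (nhdsWithin_le_nhds (s := Set.Ioi (0:ℝ)))
    simpa [zero_pow (by omega : n ≠ 0)] using this
  -- the dominating function g
  set g : ℝ → ℝ := fun r =>
    r ^ n * (deriv w r ^ 2 + w r ^ 2) + r ^ n * (deriv ψ r ^ 2 + ψ r ^ 2) with hgdef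
  have hgint : MeasureTheory.IntegrableOn g (Set.Ioi 0) := hwH1.add hψH1
  -- the integrand f
  set f : ℝ → ℝ := fun r => 2 * (r ^ n * (ψ r * w r)) with hfdef
  have hfc : ContinuousOn f (Set.Ioi 0) :=
    continuous_const.continuousOn.mul
      (((continuous_pow n).continuousOn).mul (hψcI.mul hwcI))
  have hfg : ∀ r ∈ Set.Ioi (0:ℝ), ‖f r‖ ≤ g r := by
    intro r hr
    have hr0 : (0:ℝ) < r := hr
    have hrn : (0:ℝ) ≤ r ^ n := (pow_pos hr0 n).le
    have habs : |f r| = 2 * (r ^ n * |ψ r * w r|) := by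
      rw [hfdef]
      rw [abs_mul, abs_mul, abs_of_nonneg hrn, abs_of_nonneg (by norm_num : (0:ℝ) ≤ 2)]
    rw [Real.norm_eq_abs, habs, hgdef]
    have h2 : 2 * |ψ r * w r| ≤ (deriv w r ^ 2 + w r ^ 2) + (deriv ψ r ^ 2 + ψ r ^ 2) := by
      rw [abs_mul]
      nlinarith [sq_nonneg (|ψ r| - |w r|), sq_abs (ψ r), sq_abs (w r),
        sq_nonneg (deriv ψ r), sq_nonneg (deriv w r), abs_nonneg (ψ r), abs_nonneg (w r)]
    calc 2 * (r ^ n * |ψ r * w r|) = r ^ n * (2 * |ψ r * w r|) := by ring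
      _ ≤ r ^ n * ((deriv w r ^ 2 + w r ^ 2) + (deriv ψ r ^ 2 + ψ r ^ 2)) :=
          mul_le_mul_of_nonneg_left h2 hrn
      _ = r ^ n * (deriv w r ^ 2 + w r ^ 2) + r ^ n * (deriv ψ r ^ 2 + ψ r ^ 2) := by ring
  have hfint : MeasureTheory.IntegrableOn f (Set.Ioi 0) := by
    refine MeasureTheory.Integrable.mono' hgint
      (hfc.aestronglyMeasurable measurableSet_Ioi) ?_
    rw [MeasureTheory.ae_restrict_iff' measurableSet_Ioi]
    exact MeasureTheory.ae_of_all _ hfg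
  -- the Wronskian W
  set W : ℝ → ℝ := fun r => r ^ n * (ψ r * deriv w r - w r * deriv ψ r) with hWdef
  have hWg : ∀ r ∈ Set.Ioi (0:ℝ), |W r| ≤ g r := by
    intro r hr
    have hr0 : (0:ℝ) < r := hr
    have hrn : (0:ℝ) ≤ r ^ n := (pow_pos hr0 n).le
    rw [hWdef, hgdef]
    have h2 : |ψ r * deriv w r - w r * deriv ψ r|
        ≤ (deriv w r ^ 2 + w r ^ 2) + (deriv ψ r ^ 2 + ψ r ^ 2) := by
      have ha := abs_sub (ψ r * deriv w r) (w r * deriv ψ r)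
      rw [abs_mul, abs_mul] at ha
      nlinarith [sq_nonneg (|ψ r| - |deriv w r|), sq_nonneg (|w r| - |deriv ψ r|),
        sq_abs (ψ r), sq_abs (w r), sq_abs (deriv ψ r), sq_abs (deriv w r),
        abs_nonneg (ψ r), abs_nonneg (w r), abs_nonneg (deriv ψ r), abs_nonneg (deriv w r)]
    calc |r ^ n * (ψ r * deriv w r - w r * deriv ψ r)|
        = r ^ n * |ψ r * deriv w r - w r * deriv ψ r| := by
          rw [abs_mul, abs_of_nonneg hrn]
      _ ≤ r ^ n * ((deriv w r ^ 2 + w r ^ 2) + (deriv ψ r ^ 2 + ψ r ^ 2)) :=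
          mul_le_mul_of_nonneg_left h2 hrn
      _ = r ^ n * (deriv w r ^ 2 + w r ^ 2) + r ^ n * (deriv ψ r ^ 2 + ψ r ^ 2) := by ring
  have hWd : ∀ r : ℝ, 0 < r → HasDerivAt W (f r) r := by
    intro r hr
    have h1 : HasDerivAt (fun s : ℝ => s ^ n) ((n : ℝ) * r ^ (n - 1)) r := by
      simpa using hasDerivAt_pow n r
    have h2 := ((hdψ r hr).mul (hdw' r hr)).sub ((hdw r hr).mul (hdψ' r hr))
    have h3 := h1.mul h2
    have hw'' : deriv (deriv w) r
        = V r * w r - w r * Real.log (w r ^ 2) - ((N:ℝ) - 1) / r * deriv w r := by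
      linarith [hwode r hr]
    have hψ'' : deriv (deriv ψ) r
        = V r * ψ r - (Real.log (w r ^ 2) + 2) * ψ r - ((N:ℝ) - 1) / r * deriv ψ r := by
      linarith [hψode r hr]
    have hrne : r ≠ 0 := ne_of_gt hr
    have hpow : r ^ n = r ^ (n - 1) * r := by
      rw [← pow_succ]; congr 1; omega
    convert h3 using 1
    case e'_4 => rfl
    case e'_5 => rfl
    case e'_8 => rfl
    rw [hfdef, hw'', hψ'', ← hnc, hpow]
    simp only [Pi.sub_apply, Pi.mul_apply]
    field_simp
    rw [hpow]
    ring
  -- FTC on compact subintervals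
  have hftc : ∀ a b : ℝ, 0 < a → a ≤ b → (∫ r in a..b, f r) = W b - W a := by
    intro a b ha hab
    have hsub : Set.uIcc a b ⊆ Set.Ioi (0:ℝ) := by
      rw [Set.uIcc_of_le hab]
      exact fun x hx => lt_of_lt_of_le ha hx.1
    exact intervalIntegral.integral_eq_sub_of_hasDerivAt
      (fun x hx => hWd x (hsub hx)) ((hfc.mono hsub).intervalIntegrable)
  -- === limit of h r := r^n * deriv w r at 0+ ===
  set h : ℝ → ℝ := fun r => r ^ n * deriv w r with hhdef
  set φ : ℝ → ℝ := fun r => r ^ n * (V r * w r - w r * Real.log (w r ^ 2)) with hφdef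
  have hφc : ContinuousOn φ (Set.Ioi 0) := by
    refine ((continuous_pow n).continuousOn).mul ((hVc.mul hwcI).sub (hwcI.mul ?_))
    exact (hwcI.pow 2).log (fun x hx => (pow_pos (hwpos x hx) 2).ne')
  have hhd : ∀ r : ℝ, 0 < r → HasDerivAt h (φ r) r := by
    intro r hr
    have h1 : HasDerivAt (fun s : ℝ => s ^ n) ((n : ℝ) * r ^ (n - 1)) r := by
      simpa using hasDerivAt_pow n r
    have h3 := h1.mul (hdw' r hr)
    have hw'' : deriv (deriv w) r
        = V r * w r - w r * Real.log (w r ^ 2) - ((N:ℝ) - 1) / r * deriv w r := by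
      linarith [hwode r hr]
    have hrne : r ≠ 0 := ne_of_gt hr
    have hpow : r ^ n = r ^ (n - 1) * r := by
      rw [← pow_succ]; congr 1; omega
    convert h3 using 1
    case e'_4 => rfl
    case e'_5 => rfl
    case e'_8 => rfl
    rw [hφdef, hw'', ← hnc, hpow]
    field_simp
    rw [hpow]
    ring
  -- integrability of φ near 0
  have hq1 : 1 ≤ q := by
    have h2N : (2:ℝ) ≤ (N:ℝ) := by exact_mod_cast hN
    linarith
  have hVint : MeasureTheory.IntegrableOn (fun r : ℝ => r ^ n * |V r|) (Set.Ioc 0 1) := by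
    refine aux_int_V hq1 hVc ?_
    rw [hn]; exact hVq
  obtain ⟨M, hM⟩ := (isCompact_Icc (a := (0:ℝ)) (b := 1)).exists_bound_of_continuousOn
    (hwc.mono (fun x hx => hx.1))
  set M' : ℝ := max M 1 with hM'def
  have hM'1 : (1:ℝ) ≤ M' := le_max_right _ _
  have hwle : ∀ r ∈ Set.Ioc (0:ℝ) 1, w r ≤ M' := by
    intro r hr
    have h1 := hM r ⟨hr.1.le, hr.2⟩
    rw [Real.norm_eq_abs] at h1
    exact le_trans (le_abs_self _) (le_trans h1 (le_max_left _ _))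
  set C : ℝ := 2 * (M' * Real.log M' + 1) with hCdef
  have hwlog : ∀ r ∈ Set.Ioc (0:ℝ) 1, |w r * Real.log (w r ^ 2)| ≤ C :=
    fun r hr => aux_log_bound hM'1 (hwpos r hr.1) (hwle r hr)
  have hφint : MeasureTheory.IntegrableOn φ (Set.Ioc 0 1) := by
    have hdom : MeasureTheory.IntegrableOn
        (fun r : ℝ => M' * (r ^ n * |V r|) + C) (Set.Ioc 0 1) := by
      refine (hVint.const_mul M').add ?_
      exact MeasureTheory.integrableOn_const (hs := measure_Ioc_lt_top.ne)
    refine MeasureTheory.Integrable.mono' hdom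
      ((hφc.mono (fun x hx => hx.1)).aestronglyMeasurable measurableSet_Ioc) ?_
    rw [MeasureTheory.ae_restrict_iff' measurableSet_Ioc]
    refine MeasureTheory.ae_of_all _ (fun r hr => ?_)
    have hr0 : 0 < r := hr.1
    have hrn : (0:ℝ) ≤ r ^ n := (pow_pos hr0 n).le
    have hrn1 : r ^ n ≤ 1 := pow_le_one₀ hr0.le hr.2
    have hwpos' : 0 < w r := hwpos r hr0
    have hC0 : (0:ℝ) ≤ C := le_trans (abs_nonneg _) (hwlog r hr)
    have h1 : ‖φ r‖ = r ^ n * |V r * w r - w r * Real.log (w r ^ 2)| := by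
      rw [Real.norm_eq_abs, hφdef]
      rw [abs_mul, abs_of_nonneg hrn]
    rw [h1]
    have h2 : |V r * w r - w r * Real.log (w r ^ 2)| ≤ |V r| * M' + C := by
      refine le_trans (abs_sub _ _) ?_
      have h3 : |V r * w r| ≤ |V r| * M' := by
        rw [abs_mul, abs_of_nonneg hwpos'.le]
        exact mul_le_mul_of_nonneg_left (hwle r hr) (abs_nonneg _)
      linarith [hwlog r hr]
    calc r ^ n * |V r * w r - w r * Real.log (w r ^ 2)|
        ≤ r ^ n * (|V r| * M' + C) := mul_le_mul_of_nonneg_left h2 hrn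
      _ = M' * (r ^ n * |V r|) + r ^ n * C := by ring
      _ ≤ M' * (r ^ n * |V r|) + C := by nlinarith
  -- FTC for h, and its limit at 0
  have hftch : ∀ r : ℝ, 0 < r → r ≤ 1 → (∫ x in r..1, φ x) = h 1 - h r := by
    intro r hr hr1
    have hsub : Set.uIcc r 1 ⊆ Set.Ioi (0:ℝ) := by
      rw [Set.uIcc_of_le hr1]
      exact fun x hx => lt_of_lt_of_le hr hx.1
    exact intervalIntegral.integral_eq_sub_of_hasDerivAt
      (fun x hx => hhd x (hsub hx)) ((hφc.mono hsub).intervalIntegrable)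
  have hhtend : Filter.Tendsto h (nhdsWithin 0 (Set.Ioi 0))
      (nhds (h 1 - ∫ x in Set.Ioc 0 1, φ x)) := by
    have h1 := aux_tendsto_intervalIntegral_left one_pos hφint
    have h2 : Filter.Tendsto (fun r => h 1 - ∫ x in r..1, φ x) (nhdsWithin 0 (Set.Ioi 0))
        (nhds (h 1 - ∫ x in Set.Ioc 0 1, φ x)) := tendsto_const_nhds.sub h1
    refine h2.congr' ?_
    filter_upwards [Ioc_mem_nhdsGT_of_mem ⟨le_refl (0:ℝ), one_pos⟩] with r hr
    rw [hftch r hr.1 hr.2]; ring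
  -- the limit of h at 0 is 0
  set Lh : ℝ := h 1 - ∫ x in Set.Ioc 0 1, φ x with hLhdef
  have hLh0 : Lh = 0 := by
    by_contra hLh
    have hc0 : 0 < |Lh| / 2 := by positivity
    have hev : ∀ᶠ r in nhdsWithin 0 (Set.Ioi 0), |Lh| / 2 ≤ |h r| :=
      hhtend.abs.eventually (eventually_ge_nhds (by linarith [abs_pos.2 hLh] : |Lh| / 2 < |Lh|))
    obtain ⟨δ, hδ0, hδ⟩ := (nhdsGT_basis (0:ℝ)).eventually_iff.1 hev
    set δ' : ℝ := min δ 1 with hδ'def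
    have hδ'0 : 0 < δ' := lt_min hδ0 one_pos
    have hint_w : MeasureTheory.IntegrableOn
        (fun r : ℝ => r ^ n * (deriv w r ^ 2 + w r ^ 2)) (Set.Ioo 0 δ') :=
      hwH1.mono_set (fun x hx => hx.1)
    have hint_inv : MeasureTheory.IntegrableOn
        (fun r : ℝ => (|Lh| / 2) ^ 2 * r ^ (-1:ℝ)) (Set.Ioo 0 δ') := by
      refine MeasureTheory.Integrable.mono' hint_w ?_ ?_
      · refine (continuousOn_const.mul ?_).aestronglyMeasurable measurableSet_Ioo
        exact fun x hx => ((Real.continuousAt_rpow_const x (-1)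
          (Or.inl (ne_of_gt hx.1))).continuousWithinAt)
      · rw [MeasureTheory.ae_restrict_iff' measurableSet_Ioo]
        refine MeasureTheory.ae_of_all _ (fun r hr => ?_)
        have hr0 : 0 < r := hr.1
        have hr1 : r ≤ 1 := le_of_lt (lt_of_lt_of_le hr.2 (min_le_right _ _))
        have hrδ : r < δ := lt_of_lt_of_le hr.2 (min_le_left _ _)
        have hhr : |Lh| / 2 ≤ |h r| := hδ ⟨hr0, hrδ⟩
        have hrn : 0 < r ^ n := pow_pos hr0 n
        have hrnr : r ^ n ≤ r := pow_le_of_le_one hr0.le hr1 (by omega)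
        have hsq : (|Lh| / 2) ^ 2 ≤ (r ^ n) ^ 2 * deriv w r ^ 2 := by
          have h4 : (|Lh| / 2) ^ 2 ≤ h r ^ 2 := by
            rw [← sq_abs (h r)]
            exact pow_le_pow_left₀ hc0.le hhr 2
          simp only [hhdef] at h4
          calc (|Lh| / 2) ^ 2 ≤ (r ^ n * deriv w r) ^ 2 := h4
            _ = (r ^ n) ^ 2 * deriv w r ^ 2 := by ring
        have hnorm : ‖(|Lh| / 2) ^ 2 * r ^ (-1:ℝ)‖ = (|Lh| / 2) ^ 2 * r ^ (-1:ℝ) := by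
          rw [Real.norm_eq_abs, abs_of_nonneg]
          positivity
        rw [hnorm, Real.rpow_neg_one, ← div_eq_mul_inv]
        exact aux_ineq (by positivity) hrn hrnr hsq
    have hcon : MeasureTheory.IntegrableOn (fun r : ℝ => r ^ (-1:ℝ)) (Set.Ioo 0 δ') := by
      have hne : ((|Lh| / 2) ^ 2) ≠ 0 := by positivity
      have h2 := hint_inv.const_mul ((|Lh| / 2) ^ 2)⁻¹
      refine h2.congr ?_
      refine MeasureTheory.ae_of_all _ (fun r => ?_)
      field_simp
    rw [intervalIntegral.integrableOn_Ioo_rpow_iff hδ'0] at hcon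
    norm_num at hcon
  -- limit of W at 0 is 0
  have hWtend0 : Filter.Tendsto W (nhdsWithin 0 (Set.Ioi 0)) (nhds 0) := by
    have hh0 : Filter.Tendsto h (nhdsWithin 0 (Set.Ioi 0)) (nhds 0) := by
      rwa [hLh0] at hhtend
    have ht1 : Filter.Tendsto (fun r => ψ r * h r) (nhdsWithin 0 (Set.Ioi 0))
        (nhds 0) := by
      have h9 := hψ00.mul hh0
      rwa [mul_zero] at h9
    have ht2 : Filter.Tendsto (fun r => r ^ n * w r * deriv ψ r) (nhdsWithin 0 (Set.Ioi 0))
        (nhds 0) := by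
      have h9 := (hpow0.mul hw00).mul hψ'0
      rwa [mul_zero] at h9
    have ht3 := ht1.sub ht2
    rw [sub_zero] at ht3
    refine ht3.congr ?_
    intro r
    rw [hWdef, hhdef]; ring
  -- W 1 = ∫_{Ioc 0 1} f
  have hW1 : W 1 = ∫ x in Set.Ioc 0 1, f x := by
    have h1 : Filter.Tendsto (fun a => W 1 - W a) (nhdsWithin 0 (Set.Ioi 0))
        (nhds (W 1)) := by
      have hcst : Filter.Tendsto (fun _ : ℝ => W 1) (nhdsWithin 0 (Set.Ioi 0))
          (nhds (W 1)) := tendsto_const_nhds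
      have h2 := hcst.sub hWtend0
      simpa using h2
    have h3 := aux_tendsto_intervalIntegral_left one_pos (hfint.mono_set (fun x hx => hx.1))
    have h4 : Filter.Tendsto (fun a => W 1 - W a) (nhdsWithin 0 (Set.Ioi 0))
        (nhds (∫ x in Set.Ioc 0 1, f x)) := by
      refine h3.congr' ?_
      filter_upwards [Ioc_mem_nhdsGT_of_mem ⟨le_refl (0:ℝ), one_pos⟩] with a ha
      rw [hftc a 1 ha.1 ha.2]
    exact tendsto_nhds_unique h1 h4
  -- W tends at infinity to W 1 + ∫_{Ioi 1} f
  have hWtendTop : Filter.Tendsto W Filter.atTop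
      (nhds (W 1 + ∫ x in Set.Ioi 1, f x)) := by
    have h1 := MeasureTheory.intervalIntegral_tendsto_integral_Ioi 1
      (hfint.mono_set (fun x hx => Set.mem_Ioi.2 (lt_trans one_pos hx))) Filter.tendsto_id
    have h2 : Filter.Tendsto (fun b => W 1 + ∫ x in (1:ℝ)..b, f x) Filter.atTop
        (nhds (W 1 + ∫ x in Set.Ioi 1, f x)) := tendsto_const_nhds.add h1
    refine h2.congr' ?_
    filter_upwards [Filter.eventually_ge_atTop (1:ℝ)] with b hb
    rw [hftc 1 b one_pos hb]; ring
  -- the limit at infinity is 0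
  have hLtop : W 1 + (∫ x in Set.Ioi 1, f x) = 0 := by
    by_contra hL
    set L : ℝ := W 1 + ∫ x in Set.Ioi 1, f x with hLdef
    have hev : ∀ᶠ b in Filter.atTop, |L| / 2 ≤ |W b| :=
      hWtendTop.abs.eventually (eventually_ge_nhds (by linarith [abs_pos.2 hL] : |L| / 2 < |L|))
    obtain ⟨R, hR⟩ := hev.exists_forall_of_atTop
    set R' : ℝ := max R 1 with hR'def
    have hR'0 : 0 < R' := lt_of_lt_of_le one_pos (le_max_right _ _)
    have hconst : MeasureTheory.IntegrableOn (fun _ : ℝ => |L| / 2) (Set.Ioi R') := by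
      refine MeasureTheory.Integrable.mono'
        (hgint.mono_set (fun x hx => lt_trans hR'0 hx)) aestronglyMeasurable_const ?_
      rw [MeasureTheory.ae_restrict_iff' measurableSet_Ioi]
      refine MeasureTheory.ae_of_all _ (fun r hr => ?_)
      have hr0 : 0 < r := lt_trans hR'0 hr
      have h1 : |L| / 2 ≤ |W r| := hR r (le_of_lt (lt_of_le_of_lt (le_max_left _ _) hr))
      have h2 : |W r| ≤ g r := hWg r hr0
      rw [Real.norm_eq_abs, abs_of_nonneg (by positivity : (0:ℝ) ≤ |L| / 2)]
      exact le_trans h1 h2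
    rw [MeasureTheory.integrableOn_const_iff] at hconst
    rcases hconst with h1 | h1
    · have h2 : (0:ℝ) < |L| / 2 := by positivity
      exact h2.ne' (enorm_eq_zero.1 h1)
    · rw [Real.volume_Ioi] at h1
      exact (lt_irrefl _ h1).elim
  -- conclude
  have hsplit : (∫ x in Set.Ioi (0:ℝ), f x)
      = (∫ x in Set.Ioc (0:ℝ) 1, f x) + ∫ x in Set.Ioi (1:ℝ), f x := by
    rw [← MeasureTheory.setIntegral_union (Set.Ioc_disjoint_Ioi le_rfl) measurableSet_Ioi
      (hfint.mono_set (fun x hx => hx.1)) (hfint.mono_set (fun x hx => Set.mem_Ioi.2 (lt_trans one_pos hx))),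
      Set.Ioc_union_Ioi_eq_Ioi zero_le_one]
  have hfzero : (∫ x in Set.Ioi (0:ℝ), f x) = 0 := by
    rw [hsplit, ← hW1]
    exact hLtop
  have hfinal : (∫ x in Set.Ioi (0:ℝ), f x)
      = 2 * ∫ r in Set.Ioi (0:ℝ), r ^ n * (ψ r * w r) := by
    rw [hfdef]
    exact MeasureTheory.integral_const_mul 2 _
  rw [hfinal] at hfzero
  linarith
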